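/- arXiv:2509.07955 — 2 statements merged into one kernel-verified Lean document; each statement's English description precedes it below -/
import Mathlib

section
/- (ACE proper scoring, sufficiency) If for every disagreement group g the lower-bound count k_g = ⌊N·r̄_g⌋ does not exceed the true number of instances in group g, then the true concept assignment achieves zero ACE top-k loss; since the ACE loss is nonnegative, the true distribution is a global minimizer. -/
/-- Extended negative logarithm: `-log r` for `r ∈ (0, 1]`, and `⊤` for
`r ≤ 0` (so `-log 0 = +∞`, as required for cross-entropy losses). -/
noncomputable def negLog (r : ℝ) : ENNReal :=
  if r ≤ 0 then ⊤ else ENNReal.ofReal (-Real.log r)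

/-- (ACE proper scoring, sufficiency.) If for every disagreement group `g`
the lower-bound count `k g` does not exceed the true number of instances in
group `g`, then for each group there is a valid top-k selection under the
true deterministic concept distribution consisting only of true group-`g`
members, and it attains zero ACE loss; moreover the ACE loss of any
classifier pair is nonnegative, so the true distribution is a global
minimizer. -/
theorem ace_proper_scoring_sufficiency (N : ℕ) (C1 C2 : Fin N → Bool)
    (k : Bool × Bool → ℕ)
    (hk : ∀ g : Bool × Bool, g.1 ≠ g.2 →
      k g ≤ (Finset.univ.filter (fun i : Fin N => (C1 i, C2 i) = g)).card) :
    (∀ g : Bool × Bool, g.1 ≠ g.2 → ∃ S : Finset (Fin N),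
      S.card = k g ∧
      (∀ i ∈ S, (C1 i, C2 i) = g) ∧
      (∀ i ∈ S, ∀ j ∉ S,
        (if (C1 j, C2 j) = g then (1:ℝ) else 0) ≤ (if (C1 i, C2 i) = g then (1:ℝ) else 0)) ∧
      (∑ i ∈ S, (negLog (if C1 i = g.1 then (1:ℝ) else 0)
          + negLog (if C2 i = g.2 then (1:ℝ) else 0))) = 0)
    ∧ ∀ (p1 p2 : Fin N → Bool → ℝ) (g : Bool × Bool) (S : Finset (Fin N)),
        0 ≤ ∑ i ∈ S, (negLog (p1 i g.1) + negLog (p2 i g.2)) := by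

  constructor
  · intro g hg
    obtain ⟨S, hS, hcard⟩ := Finset.exists_subset_card_eq (hk g hg)
    have hmem : ∀ i ∈ S, (C1 i, C2 i) = g := by
      intro i hi
      have := hS hi
      simpa using (Finset.mem_filter.mp this).2
    refine ⟨S, hcard, hmem, ?_, ?_⟩
    · intro i hi j hj
      rw [if_pos (hmem i hi)]
      split <;> norm_num
    · apply Finset.sum_eq_zero
      intro i hi
      have h := hmem i hi
      have h1 : C1 i = g.1 := by rw [Prod.ext_iff] at h; exact h.1
      have h2 : C2 i = g.2 := by rw [Prod.ext_iff] at h; exact h.2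
      rw [if_pos h1, if_pos h2]
      simp [negLog]
  · intro p1 p2 g S
    exact zero_le
end

section
/- (ACE proper scoring, necessity) If for some disagreement group g the lower-bound count k_g exceeds the true number n_g of instances in group g, then the true concept distribution incurs strictly positive ACE top-k loss (in particular, the loss selects an instance not in group g, contributing −log 0 = +∞), so ACE fails to be a proper scoring rule. -/
/-- (ACE proper scoring, necessity.) If for some disagreement group `g` the
lower-bound count `k g` exceeds the true number of instances in group `g`
(while `k g ≤ N`), then any selection of `k g` indices must include an
instance not in group `g`, and the true concept distribution incurs strictly
positive (indeed infinite, via `−log 0 = +∞`) ACE top-k loss there — so ACE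
fails to attain the global minimum of `0` on the true distribution. -/
theorem ace_proper_scoring_necessity (N : ℕ) (C1 C2 : Fin N → Bool)
    (g : Bool × Bool) (hg : g.1 ≠ g.2) (kg : ℕ) (hkN : kg ≤ N)
    (hk : (Finset.univ.filter (fun i : Fin N => (C1 i, C2 i) = g)).card < kg) :
    ∀ S : Finset (Fin N), S.card = kg →
      (∃ i ∈ S, (C1 i, C2 i) ≠ g) ∧
      0 < ∑ i ∈ S, (negLog (if C1 i = g.1 then (1:ℝ) else 0)
          + negLog (if C2 i = g.2 then (1:ℝ) else 0)) := by
  intro S hS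
  have hex : ∃ i ∈ S, (C1 i, C2 i) ≠ g := by
    by_contra h
    push_neg at h
    have hsub : S ⊆ Finset.univ.filter (fun i : Fin N => (C1 i, C2 i) = g) := by
      intro i hi
      simp [h i hi]
    have := Finset.card_le_card hsub
    omega
  refine ⟨hex, ?_⟩
  obtain ⟨i, hiS, hi⟩ := hex
  have hterm : negLog (if C1 i = g.1 then (1:ℝ) else 0)
      + negLog (if C2 i = g.2 then (1:ℝ) else 0) = ⊤ := by
    have : C1 i ≠ g.1 ∨ C2 i ≠ g.2 := by
      by_contra h
      push_neg at h
      exact hi (by simp [h.1, h.2])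
    rcases this with h | h <;> simp [h, negLog]
  have : (⊤ : ENNReal) ≤ ∑ j ∈ S, (negLog (if C1 j = g.1 then (1:ℝ) else 0)
      + negLog (if C2 j = g.2 then (1:ℝ) else 0)) := by
    calc (⊤:ENNReal) = _ := hterm.symm
    _ ≤ _ := Finset.single_le_sum (f := fun j => negLog (if C1 j = g.1 then (1:ℝ) else 0) + negLog (if C2 j = g.2 then (1:ℝ) else 0)) (fun j _ => zero_le) hiS
  simp [top_le_iff.mp this]
end
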